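/- For any square-integrable random vectors X and Y in ℝ^d with laws ν^X and ν^Y, the covariance matrices satisfy ‖C_{X,X} − C_{Y,Y}‖_F ≤ 2 D₂(ν^X,ν^Y)² + 2 D₂(ν^X,ν^Y) (Tr(C_{Y,Y}))^{1/2}. -/

import Mathlib

open MeasureTheory ProbabilityTheory Matrix
open scoped ENNReal NNReal RealInnerProductSpace

noncomputable section

/-- Frobenius norm of a real matrix. -/
def frob {d : ℕ} (M : Matrix (Fin d) (Fin d) ℝ) : ℝ := Real.sqrt (∑ i, ∑ j, (M i j)^2)

/-- Cross-covariance matrix of two random vectors. -/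
def covM {d : ℕ} {Ω : Type*} [MeasurableSpace Ω] (P : Measure Ω)
    (X Y : Ω → EuclideanSpace ℝ (Fin d)) : Matrix (Fin d) (Fin d) ℝ :=
  Matrix.of fun i j =>
    ∫ ω, (X ω i - ∫ ω', X ω' i ∂P) * (Y ω j - ∫ ω', Y ω' j ∂P) ∂P

/-- Squared 2-Wasserstein distance (real-valued, via couplings with integrable cost). -/
def wass2sq {d : ℕ} (μ ν : Measure (EuclideanSpace ℝ (Fin d))) : ℝ :=
  sInf {r | ∃ P : Measure (EuclideanSpace ℝ (Fin d) × EuclideanSpace ℝ (Fin d)),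
    P.fst = μ ∧ P.snd = ν ∧ Integrable (fun p => ‖p.1 - p.2‖^2) P ∧
    r = ∫ p, ‖p.1 - p.2‖^2 ∂P}

/-- 2-Wasserstein distance. -/
def wassDist {d : ℕ} (μ ν : Measure (EuclideanSpace ℝ (Fin d))) : ℝ :=
  Real.sqrt (wass2sq μ ν)

section Aux

variable {α : Type*} [MeasurableSpace α] {μ : Measure α}

/-- Cauchy–Schwarz for integrals. -/
lemma integral_sq_CS {f g : α → ℝ} (hf : MemLp f 2 μ) (hg : MemLp g 2 μ) :
    (∫ x, f x * g x ∂μ)^2 ≤ (∫ x, f x^2 ∂μ) * (∫ x, g x^2 ∂μ) := by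
  set F : Lp ℝ 2 μ := hf.toLp f
  set G : Lp ℝ 2 μ := hg.toLp g
  have hFf : (F : α → ℝ) =ᵐ[μ] f := hf.coeFn_toLp
  have hGg : (G : α → ℝ) =ᵐ[μ] g := hg.coeFn_toLp
  have hFG : ⟪F, G⟫ = ∫ x, f x * g x ∂μ := by
    rw [L2.inner_def]
    refine integral_congr_ae ?_
    filter_upwards [hFf, hGg] with x hfx hgx
    simp [hfx, hgx, mul_comm]
  have hFF : ⟪F, F⟫ = ∫ x, f x^2 ∂μ := by
    rw [L2.inner_def]
    refine integral_congr_ae ?_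
    filter_upwards [hFf] with x hfx
    simp [hfx, sq]
  have hGG : ⟪G, G⟫ = ∫ x, g x^2 ∂μ := by
    rw [L2.inner_def]
    refine integral_congr_ae ?_
    filter_upwards [hGg] with x hgx
    simp [hgx, sq]
  have h1 : |⟪F, G⟫| ≤ ‖F‖ * ‖G‖ := abs_real_inner_le_norm F G
  calc (∫ x, f x * g x ∂μ)^2 = |⟪F, G⟫|^2 := by rw [hFG, sq_abs]
    _ ≤ (‖F‖ * ‖G‖)^2 := pow_le_pow_left₀ (abs_nonneg _) h1 2
    _ = ‖F‖^2 * ‖G‖^2 := by ring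
    _ = (∫ x, f x^2 ∂μ) * (∫ x, g x^2 ∂μ) := by
        rw [← hFF, ← hGG, real_inner_self_eq_norm_sq, real_inner_self_eq_norm_sq]

/-- L²·L² is integrable. -/
lemma integrable_mul_of_L2 {f g : α → ℝ} (hf : MemLp f 2 μ) (hg : MemLp g 2 μ) :
    Integrable (fun x => f x * g x) μ := by
  have h := hg.smul hf (p := 2) (q := 2) (r := 1)
    (hpqr := ⟨by simp [ENNReal.inv_two_add_inv_two, one_div]⟩)
  rw [memLp_one_iff_integrable] at h
  exact h.congr (by filter_upwards with x; simp [smul_eq_mul, mul_comm])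

lemma frob_eq_norm {d : ℕ} (M : Matrix (Fin d) (Fin d) ℝ) :
    frob M = ‖(WithLp.equiv 2 (Fin d × Fin d → ℝ)).symm (fun p => M p.1 p.2)‖ := by
  rw [EuclideanSpace.norm_eq, frob]
  congr 1
  rw [Fintype.sum_prod_type]
  simp [sq_abs]

lemma frob_add_le {d : ℕ} (A B : Matrix (Fin d) (Fin d) ℝ) :
    frob (A + B) ≤ frob A + frob B := by
  rw [frob_eq_norm, frob_eq_norm, frob_eq_norm]
  have : (WithLp.equiv 2 (Fin d × Fin d → ℝ)).symm (fun p => (A + B) p.1 p.2)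
      = (WithLp.equiv 2 (Fin d × Fin d → ℝ)).symm (fun p => A p.1 p.2)
        + (WithLp.equiv 2 (Fin d × Fin d → ℝ)).symm (fun p => B p.1 p.2) := by
    rfl
  rw [this]; exact norm_add_le _ _

lemma centered_sq_le {h : α → ℝ} [IsProbabilityMeasure μ] (hh : MemLp h 2 μ) :
    ∫ x, (h x - ∫ y, h y ∂μ)^2 ∂μ ≤ ∫ x, (h x)^2 ∂μ := by
  have h2 := variance_le_expectation_sq (μ := μ) hh.aestronglyMeasurable
  have h3 : variance h μ = ∫ x, (h x - ∫ y, h y ∂μ)^2 ∂μ := by rw [variance_eq_integral hh.aestronglyMeasurable.aemeasurable]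
  rw [h3] at h2
  convert h2 using 3
  rfl

lemma memℒp_coord {d : ℕ} {f : α → EuclideanSpace ℝ (Fin d)} (hf : MemLp f 2 μ) (i : Fin d) :
    MemLp (fun x => f x i) 2 μ :=
  (EuclideanSpace.proj (𝕜 := ℝ) i).comp_memLp' hf

lemma covM_map {d : ℕ} (ρ : Measure α) (h : α → EuclideanSpace ℝ (Fin d))
    (hm : AEMeasurable h ρ) : covM (ρ.map h) id id = covM ρ h h := by
  have hcoord : ∀ k : Fin d, ∫ x, (id x : EuclideanSpace ℝ (Fin d)) k ∂(ρ.map h)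
      = ∫ ω, h ω k ∂ρ := fun k =>
    integral_map hm ((EuclideanSpace.proj (𝕜 := ℝ) k).continuous.aestronglyMeasurable)
  ext i j
  simp only [covM, Matrix.of_apply, hcoord]
  have hc : ∀ k : Fin d, Continuous fun x : EuclideanSpace ℝ (Fin d) => x k :=
    fun k => (EuclideanSpace.proj (𝕜 := ℝ) k).continuous
  exact integral_map hm
    ((((hc i).sub continuous_const).mul ((hc j).sub continuous_const)).aestronglyMeasurable)

/-- Key deterministic-coupling estimate. -/
lemma key {d : ℕ} (μ : Measure α) [IsProbabilityMeasure μ]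
    (f g : α → EuclideanSpace ℝ (Fin d)) (hf : MemLp f 2 μ) (hg : MemLp g 2 μ) :
    frob (covM μ f f - covM μ g g) ≤
      2 * (∫ x, ‖f x - g x‖^2 ∂μ)
        + 2 * Real.sqrt (∫ x, ‖f x - g x‖^2 ∂μ) * Real.sqrt ((covM μ g g).trace) := by
  set R := ∫ x, ‖f x - g x‖^2 ∂μ with hR_def
  set F : Fin d → α → ℝ := fun i x => f x i - ∫ y, f y i ∂μ with hF_def
  set G : Fin d → α → ℝ := fun i x => g x i - ∫ y, g y i ∂μ with hG_def
  set D : Fin d → α → ℝ := fun i x => F i x - G i x with hD_def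
  have hFm : ∀ i, MemLp (F i) 2 μ := fun i => (memℒp_coord hf i).sub (memLp_const _)
  have hGm : ∀ i, MemLp (G i) 2 μ := fun i => (memℒp_coord hg i).sub (memLp_const _)
  have hDm : ∀ i, MemLp (D i) 2 μ := fun i => (hFm i).sub (hGm i)
  have hDsq : ∀ i, 0 ≤ ∫ x, (D i x)^2 ∂μ := fun i => integral_nonneg fun x => sq_nonneg _
  have hGsq : ∀ i, 0 ≤ ∫ x, (G i x)^2 ∂μ := fun i => integral_nonneg fun x => sq_nonneg _
  set ε2 := ∑ i, ∫ x, (D i x)^2 ∂μ with hε2_def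
  have hε2_nonneg : 0 ≤ ε2 := Finset.sum_nonneg fun i _ => hDsq i
  set T := (covM μ g g).trace with hT_def
  have hT : T = ∑ i, ∫ x, (G i x)^2 ∂μ := by
    rw [hT_def, Matrix.trace]
    refine Finset.sum_congr rfl fun i _ => ?_
    simp only [Matrix.diag, covM, Matrix.of_apply]
    refine integral_congr_ae (ae_of_all _ fun x => ?_)
    simp [hG_def, sq]
  have hT_nonneg : 0 ≤ T := by rw [hT]; exact Finset.sum_nonneg fun i _ => hGsq i
  have hR_nonneg : 0 ≤ R := integral_nonneg fun x => sq_nonneg _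
  set M1 : Matrix (Fin d) (Fin d) ℝ := Matrix.of fun i j => ∫ x, D i x * D j x ∂μ with hM1
  set M2 : Matrix (Fin d) (Fin d) ℝ := Matrix.of fun i j => ∫ x, D i x * G j x ∂μ with hM2
  set M3 : Matrix (Fin d) (Fin d) ℝ := Matrix.of fun i j => ∫ x, G i x * D j x ∂μ with hM3
  have hdec : covM μ f f - covM μ g g = M1 + M2 + M3 := by
    ext i j
    simp only [Matrix.sub_apply, Matrix.add_apply, hM1, hM2, hM3, covM, Matrix.of_apply]
    have iDD : Integrable (fun x => D i x * D j x) μ := integrable_mul_of_L2 (hDm i) (hDm j)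
    have iDG : Integrable (fun x => D i x * G j x) μ := integrable_mul_of_L2 (hDm i) (hGm j)
    have iGD : Integrable (fun x => G i x * D j x) μ := integrable_mul_of_L2 (hGm i) (hDm j)
    have h₁ : Integrable (fun x => D i x * D j x + D i x * G j x) μ := iDD.add iDG
    have e1 : ∫ x, D i x * D j x ∂μ + ∫ x, D i x * G j x ∂μ + ∫ x, G i x * D j x ∂μ
        = ∫ x, (D i x * D j x + D i x * G j x + G i x * D j x) ∂μ := by
      rw [integral_add h₁ iGD, integral_add iDD iDG]
    have e2 : ∫ x, (D i x * D j x + D i x * G j x + G i x * D j x) ∂μ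
        = ∫ x, (F i x * F j x - G i x * G j x) ∂μ := by
      refine integral_congr_ae (ae_of_all _ fun x => ?_)
      simp only [hD_def]; ring
    have iFF : Integrable (fun x => F i x * F j x) μ := integrable_mul_of_L2 (hFm i) (hFm j)
    have iGG : Integrable (fun x => G i x * G j x) μ := integrable_mul_of_L2 (hGm i) (hGm j)
    have e3 : ∫ x, (F i x * F j x - G i x * G j x) ∂μ
        = ∫ x, F i x * F j x ∂μ - ∫ x, G i x * G j x ∂μ := integral_sub iFF iGG
    rw [e1, e2, e3]
  have hfrob1 : frob M1 ≤ ε2 := by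
    rw [frob]
    have : ∑ i, ∑ j, (M1 i j)^2 ≤ ε2 * ε2 := by
      rw [hε2_def, Finset.sum_mul_sum]
      refine Finset.sum_le_sum fun i _ => Finset.sum_le_sum fun j _ => ?_
      simpa [hM1] using integral_sq_CS (hDm i) (hDm j)
    calc Real.sqrt (∑ i, ∑ j, (M1 i j)^2) ≤ Real.sqrt (ε2 * ε2) := Real.sqrt_le_sqrt this
      _ = ε2 := Real.sqrt_mul_self hε2_nonneg
  have hfrob2 : frob M2 ≤ Real.sqrt ε2 * Real.sqrt T := by
    rw [frob]
    have : ∑ i, ∑ j, (M2 i j)^2 ≤ ε2 * T := by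
      rw [hε2_def, hT, Finset.sum_mul_sum]
      refine Finset.sum_le_sum fun i _ => Finset.sum_le_sum fun j _ => ?_
      simpa [hM2] using integral_sq_CS (hDm i) (hGm j)
    calc Real.sqrt (∑ i, ∑ j, (M2 i j)^2) ≤ Real.sqrt (ε2 * T) := Real.sqrt_le_sqrt this
      _ = Real.sqrt ε2 * Real.sqrt T := Real.sqrt_mul hε2_nonneg T
  have hfrob3 : frob M3 ≤ Real.sqrt ε2 * Real.sqrt T := by
    rw [frob]
    have : ∑ i, ∑ j, (M3 i j)^2 ≤ T * ε2 := by
      rw [hε2_def, hT, Finset.sum_mul_sum]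
      refine Finset.sum_le_sum fun i _ => Finset.sum_le_sum fun j _ => ?_
      simpa [hM3] using integral_sq_CS (hGm i) (hDm j)
    calc Real.sqrt (∑ i, ∑ j, (M3 i j)^2) ≤ Real.sqrt (T * ε2) := Real.sqrt_le_sqrt this
      _ = Real.sqrt ε2 * Real.sqrt T := by
          rw [Real.sqrt_mul hT_nonneg, mul_comm]
  have hε2R : ε2 ≤ R := by
    have hcoord : ∀ i, ∫ x, (D i x)^2 ∂μ ≤ ∫ x, (f x i - g x i)^2 ∂μ := by
      intro i
      have hif : Integrable (fun y => f y i) μ := (memℒp_coord hf i).integrable one_le_two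
      have hig : Integrable (fun y => g y i) μ := (memℒp_coord hg i).integrable one_le_two
      have hint : ∫ y, (f y i - g y i) ∂μ = (∫ y, f y i ∂μ) - ∫ y, g y i ∂μ :=
        integral_sub hif hig
      have hm2 : MemLp (fun x => f x i - g x i) 2 μ :=
        (memℒp_coord hf i).sub (memℒp_coord hg i)
      have h2 := centered_sq_le (μ := μ) hm2
      rw [hint] at h2
      refine le_trans (le_of_eq ?_) h2
      refine integral_congr_ae (ae_of_all _ fun x => ?_)
      simp only [hD_def, hF_def, hG_def]; ring
    have hsum : ∑ i, ∫ x, (f x i - g x i)^2 ∂μ = R := by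
      have hsq : ∀ i : Fin d, Integrable (fun x => (f x i - g x i)^2) μ := by
        intro i
        have hm2 : MemLp (fun x => f x i - g x i) 2 μ :=
          (memℒp_coord hf i).sub (memℒp_coord hg i)
        simpa only [pow_two] using integrable_mul_of_L2 hm2 hm2
      rw [hR_def, ← integral_finset_sum _ (fun i _ => hsq i)]
      refine integral_congr_ae (ae_of_all _ fun x => ?_)
      show ∑ i, (f x i - g x i)^2 = ‖f x - g x‖^2
      rw [EuclideanSpace.norm_eq, Real.sq_sqrt (Finset.sum_nonneg fun i _ => sq_nonneg _)]
      refine Finset.sum_congr rfl fun i _ => ?_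
      simp [sq_abs]
    calc ε2 ≤ ∑ i, ∫ x, (f x i - g x i)^2 ∂μ := Finset.sum_le_sum fun i _ => hcoord i
      _ = R := hsum
  have hsqrt : Real.sqrt ε2 ≤ Real.sqrt R := Real.sqrt_le_sqrt hε2R
  have hmain : frob (covM μ f f - covM μ g g) ≤ ε2 + 2 * (Real.sqrt ε2 * Real.sqrt T) := by
    rw [hdec]
    calc frob (M1 + M2 + M3) ≤ frob (M1 + M2) + frob M3 := frob_add_le _ _
      _ ≤ frob M1 + frob M2 + frob M3 := by linarith [frob_add_le M1 M2]
      _ ≤ ε2 + 2 * (Real.sqrt ε2 * Real.sqrt T) := by linarith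
  have hfin : ε2 + 2 * (Real.sqrt ε2 * Real.sqrt T) ≤ 2 * R + 2 * Real.sqrt R * Real.sqrt T := by
    have h1 : Real.sqrt ε2 * Real.sqrt T ≤ Real.sqrt R * Real.sqrt T :=
      mul_le_mul_of_nonneg_right hsqrt (Real.sqrt_nonneg T)
    nlinarith [Real.sqrt_nonneg R, Real.sqrt_nonneg T]
  linarith

end Aux

/-- `‖C_{X,X} − C_{Y,Y}‖_F ≤ 2 D₂(ν^X,ν^Y)² + 2 D₂(ν^X,ν^Y) (Tr C_{Y,Y})^{1/2}`. -/
theorem frob_cov_sub_cov_le_wasserstein {d : ℕ} {Ω : Type*} [MeasurableSpace Ω]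
    (P : Measure Ω) [IsProbabilityMeasure P]
    (X Y : Ω → EuclideanSpace ℝ (Fin d))
    (hX : MemLp X 2 P) (hY : MemLp Y 2 P) :
    frob (covM P X X - covM P Y Y) ≤
      2 * wassDist (P.map X) (P.map Y)^2
        + 2 * wassDist (P.map X) (P.map Y) * Real.sqrt ((covM P Y Y).trace) := by
  classical
  have hXm : AEMeasurable X P := hX.aestronglyMeasurable.aemeasurable
  have hYm : AEMeasurable Y P := hY.aestronglyMeasurable.aemeasurable
  set S : Set ℝ := {r | ∃ Q : Measure (EuclideanSpace ℝ (Fin d) × EuclideanSpace ℝ (Fin d)),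
    Q.fst = P.map X ∧ Q.snd = P.map Y ∧ Integrable (fun p => ‖p.1 - p.2‖^2) Q ∧
    r = ∫ p, ‖p.1 - p.2‖^2 ∂Q} with hS_def
  have hw : wass2sq (P.map X) (P.map Y) = sInf S := rfl
  -- the set of coupling costs is nonempty
  have hS_ne : S.Nonempty := by
    refine ⟨∫ p, ‖p.1 - p.2‖^2 ∂(P.map fun ω => (X ω, Y ω)), ?_⟩
    refine ⟨P.map fun ω => (X ω, Y ω), ?_, ?_, ?_, rfl⟩
    · exact Measure.fst_map_prodMk₀ hYm
    · exact Measure.snd_map_prodMk₀ hXm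
    · have hcont : Continuous fun p : EuclideanSpace ℝ (Fin d) × EuclideanSpace ℝ (Fin d) =>
        ‖p.1 - p.2‖^2 := ((continuous_fst.sub continuous_snd).norm.pow 2)
      rw [integrable_map_measure hcont.aestronglyMeasurable (hXm.prodMk hYm)]
      have hZ : MemLp (fun ω => X ω - Y ω) 2 P := hX.sub hY
      have := integrable_mul_of_L2 hZ.norm hZ.norm
      refine this.congr (ae_of_all _ fun ω => ?_)
      simp [Function.comp, pow_two]
  have hS_lb : ∀ r ∈ S, (0:ℝ) ≤ r := by
    rintro r ⟨Q, -, -, -, rfl⟩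
    exact integral_nonneg fun p => sq_nonneg _
  have hm0 : 0 ≤ sInf S := le_csInf hS_ne hS_lb
  set T := (covM P Y Y).trace with hT_def
  -- bound for each coupling cost
  have hkey : ∀ r ∈ S, frob (covM P X X - covM P Y Y)
      ≤ 2*r + 2*Real.sqrt r * Real.sqrt T := by
    rintro r ⟨Q, hfst, hsnd, hint, rfl⟩
    have hPX : IsProbabilityMeasure (P.map X) := Measure.isProbabilityMeasure_map hXm
    have hQ : IsProbabilityMeasure Q := by
      constructor
      rw [← Measure.fst_univ, hfst]
      exact measure_univ
    have hf1 : MemLp (id : EuclideanSpace ℝ (Fin d) → EuclideanSpace ℝ (Fin d)) 2 (P.map X) :=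
      (memLp_map_measure_iff aestronglyMeasurable_id hXm).mpr hX
    have hg1 : MemLp (id : EuclideanSpace ℝ (Fin d) → EuclideanSpace ℝ (Fin d)) 2 (P.map Y) :=
      (memLp_map_measure_iff aestronglyMeasurable_id hYm).mpr hY
    have hf2 : MemLp (id : _) 2 (Q.map Prod.fst) := by
      show MemLp id 2 Q.fst
      rw [hfst]; exact hf1
    have hg2 : MemLp (id : _) 2 (Q.map Prod.snd) := by
      show MemLp id 2 Q.snd
      rw [hsnd]; exact hg1
    have hfm : MemLp (Prod.fst : _ → EuclideanSpace ℝ (Fin d)) 2 Q :=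
      (memLp_map_measure_iff aestronglyMeasurable_id measurable_fst.aemeasurable).mp hf2
    have hgm : MemLp (Prod.snd : _ → EuclideanSpace ℝ (Fin d)) 2 Q :=
      (memLp_map_measure_iff aestronglyMeasurable_id measurable_snd.aemeasurable).mp hg2
    have hcf : covM Q Prod.fst Prod.fst = covM P X X := by
      rw [← covM_map Q Prod.fst measurable_fst.aemeasurable]
      have h1 : Q.map Prod.fst = P.map X := hfst
      rw [h1, covM_map P X hXm]
    have hcg : covM Q Prod.snd Prod.snd = covM P Y Y := by
      rw [← covM_map Q Prod.snd measurable_snd.aemeasurable]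
      have h1 : Q.map Prod.snd = P.map Y := hsnd
      rw [h1, covM_map P Y hYm]
    have h := key Q Prod.fst Prod.snd hfm hgm
    rw [hcf, hcg] at h
    exact h
  -- pass to the infimum
  have hle : ∀ ε > (0:ℝ), frob (covM P X X - covM P Y Y)
      ≤ 2*(sInf S + ε) + 2*Real.sqrt (sInf S + ε) * Real.sqrt T := by
    intro ε hε
    obtain ⟨r, hrS, hrlt⟩ := Real.lt_sInf_add_pos hS_ne hε
    refine le_trans (hkey r hrS) ?_
    have h0r : 0 ≤ r := hS_lb r hrS
    have hsq : Real.sqrt r ≤ Real.sqrt (sInf S + ε) := Real.sqrt_le_sqrt hrlt.le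
    have hsT : 0 ≤ Real.sqrt T := Real.sqrt_nonneg T
    nlinarith
  have htend : Filter.Tendsto (fun ε : ℝ => 2*(sInf S + ε) + 2*Real.sqrt (sInf S + ε) * Real.sqrt T)
      (nhdsWithin 0 (Set.Ioi 0)) (nhds (2*(sInf S) + 2*Real.sqrt (sInf S) * Real.sqrt T)) := by
    have hc : Continuous fun ε : ℝ => 2*(sInf S + ε) + 2*Real.sqrt (sInf S + ε) * Real.sqrt T :=
      (continuous_const.mul (continuous_const.add continuous_id)).add
        ((continuous_const.mul (Real.continuous_sqrt.comp
          (continuous_const.add continuous_id))).mul continuous_const)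
    have := (hc.tendsto 0).mono_left (nhdsWithin_le_nhds (s := Set.Ioi (0:ℝ)))
    simpa using this
  have hfinal : frob (covM P X X - covM P Y Y)
      ≤ 2*(sInf S) + 2*Real.sqrt (sInf S) * Real.sqrt T := by
    refine ge_of_tendsto htend ?_
    filter_upwards [self_mem_nhdsWithin] with ε hε using hle ε hε
  have hWd : wassDist (P.map X) (P.map Y) = Real.sqrt (sInf S) := by
    rw [wassDist, hw]
  have hW2 : wassDist (P.map X) (P.map Y)^2 = sInf S := by
    rw [hWd, Real.sq_sqrt hm0]
  rw [hW2, hWd]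
  exact hfinal
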